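/- Let G = (V_G, E_G, w_G) and H = (V_H, E_H, w_H) be weighted digraphs, and suppose there are digraph maps φ : G → H and ψ : H → G with one-step homotopy chains ψ∘φ = f_0 ≃₁ f_1 ≃₁ … ≃₁ f_m = id_G and φ∘ψ = g_0 ≃₁ g_1 ≃₁ … ≃₁ g_m = id_H. Set η = max{ dis(φ), dis(ψ), ½·max_{k=1,…,m−1} dis(f_k), ½·max_{k=1,…,m−1} dis(g_k), ½·max_{k=1,…,m} cod(f_{k−1}, f_k), ½·max_{k=1,…,m} cod(g_{k−1}, g_k) }. Then for every p ∈ ℕ and every field K, the persistence modules δ ↦ H_p(G^δ) and δ ↦ H_p(H^δ) (indexed by δ ∈ [0, ∞), with structure maps induced by the inclusions of edge sublevel digraphs) are η-interleaved, via the maps induced on path homology by φ and ψ. -/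

import Mathlib

/-!
STATEMENT 15: Let G, H be weighted digraphs with digraph maps φ : G → H, ψ : H → G and
one-step homotopy chains ψ∘φ = f₀ ≃₁ … ≃₁ f_m = id_G and φ∘ψ = g₀ ≃₁ … ≃₁ g_m = id_H.
With η = max{dis(φ), dis(ψ), ½·max_{1≤k≤m−1} dis(f_k), ½·max_{1≤k≤m−1} dis(g_k),
½·max_{1≤k≤m} cod(f_{k−1}, f_k), ½·max_{1≤k≤m} cod(g_{k−1}, g_k)}, for every p ∈ ℕ and
every field K the persistence modules δ ↦ H_p(G^δ) and δ ↦ H_p(H^δ) (δ ∈ [0,∞),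
structure maps induced by the inclusions of edge sublevel digraphs) are η-interleaved via
the maps induced on path homology by φ and ψ.

The interleaving is expressed at the level of cycles and boundaries: the chain maps
induced by φ and ψ carry p-cycles/p-boundaries of G^δ (resp. H^δ) to those of H^{δ+η}
(resp. G^{δ+η}); the structure maps are the submodule inclusions (with which these chain
maps commute automatically, the induced chain map being independent of δ); and the
composites agree on homology with the structure maps δ ≤ δ+2η, i.e. ψ_*(φ_* z) − z and
φ_*(ψ_* z) − z are boundaries at level δ+2η.
-/

open scoped Classical

namespace PH

/-- An elementary path (a list of vertices) is regular if no two consecutive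
vertices coincide. -/
def Reg {V : Type} (l : List V) : Prop := l.Chain' (· ≠ ·)

/-- The regular boundary operator ∂ on the span of regular paths (all degrees at once,
with the convention that ∂ vanishes on 0-paths): on a basis path `p` of length ≥ 2 it is
the alternating sum of the vertex deletions, with non-regular terms replaced by 0. -/
noncomputable def dReg (K : Type) [Field K] (V : Type) :
    (List V →₀ K) →ₗ[K] (List V →₀ K) :=
  Finsupp.lsum K fun p => LinearMap.toSpanSingleton K (List V →₀ K)
    (if 2 ≤ p.length then
      ∑ q : Fin p.length, ((-1 : K) ^ (q : ℕ)) •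
        (if Reg (p.eraseIdx (q : ℕ)) then Finsupp.single (p.eraseIdx (q : ℕ)) (1 : K) else 0)
    else 0)

/-- The map induced on regular chains by a vertex map f:
`e_{i₀…iₙ} ↦ e_{f(i₀)…f(iₙ)}` if the image path is regular, and 0 otherwise. -/
noncomputable def find (K : Type) [Field K] {V W : Type} (f : V → W) :
    (List V →₀ K) →ₗ[K] (List W →₀ K) :=
  Finsupp.lsum K fun p => LinearMap.toSpanSingleton K (List W →₀ K)
    (if Reg (p.map f) then Finsupp.single (p.map f) (1 : K) else 0)

/-- `A_n(P)`: the span of the regular allowed n-paths (lists of n+1 vertices in P). -/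
def Asub (K : Type) [Field K] {V : Type} (P : Set (List V)) (n : ℕ) :
    Submodule K (List V →₀ K) :=
  Finsupp.supported K K {l | l ∈ P ∧ l.length = n + 1 ∧ Reg l}

/-- `Ω_n(P)`: the ∂-invariant allowed regular n-chains. -/
noncomputable def OmegaSub (K : Type) [Field K] {V : Type} (P : Set (List V)) (n : ℕ) :
    Submodule K (List V →₀ K) :=
  Asub K P n ⊓ Submodule.comap (dReg K V) (Asub K P (n - 1))

/-- The n-cycles of Ω_*(P). -/
noncomputable def Zsub (K : Type) [Field K] {V : Type} (P : Set (List V)) (n : ℕ) :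
    Submodule K (List V →₀ K) :=
  OmegaSub K P n ⊓ LinearMap.ker (dReg K V)

/-- The n-boundaries ∂Ω_{n+1}(P). -/
noncomputable def Bsub (K : Type) [Field K] {V : Type} (P : Set (List V)) (n : ℕ) :
    Submodule K (List V →₀ K) :=
  Submodule.map (dReg K V) (OmegaSub K P (n + 1))

/-- Path homology `H_n(P)`, realized as the image of the n-cycles in the quotient of the
ambient space by the n-boundaries (so `H_n(P) ≅ Z_n/(Z_n ∩ B_n) = Z_n/B_n`). -/
noncomputable def Hsm (K : Type) [Field K] {V : Type} (P : Set (List V)) (n : ℕ) :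
    Submodule K ((List V →₀ K) ⧸ Bsub K P n) :=
  Submodule.map (Bsub K P n).mkQ (Zsub K P n)

/-- A path complex on V: a set of non-empty elementary paths (lists) closed under
removing the last (`dropLast`) or the first (`tail`) vertex. -/
structure PathComplex (V : Type) where
  carrier : Set (List V)
  not_nil : ∀ p ∈ carrier, p ≠ []
  dropLast_mem : ∀ p ∈ carrier, 2 ≤ p.length → p.dropLast ∈ carrier
  tail_mem : ∀ p ∈ carrier, 2 ≤ p.length → p.tail ∈ carrier

end PH

namespace PH

/-- A weighted digraph: an edge relation without self-loops together with positive
edge weights. -/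
structure WDigraph (V : Type) where
  edge : V → V → Prop
  loopless : ∀ v : V, ¬ edge v v
  w : V → V → ℝ
  w_pos : ∀ i j : V, edge i j → 0 < w i j

/-- The edge sublevel digraph G^δ: the edges of weight ≤ δ. -/
def sublevel {V : Type} (G : WDigraph V) (δ : ℝ) : WDigraph V where
  edge i j := G.edge i j ∧ G.w i j ≤ δ
  loopless v h := G.loopless v h.1
  w := G.w
  w_pos i j h := G.w_pos i j h.1

/-- A digraph map: i → j implies f(i) = f(j) or f(i) → f(j). -/
def IsDGMap {V W : Type} (G : WDigraph V) (H : WDigraph W) (f : V → W) : Prop :=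
  ∀ i j : V, G.edge i j → f i = f j ∨ H.edge (f i) (f j)

/-- The distortion dis(φ) of a digraph map between weighted digraphs
(the max over the empty set being 0). -/
noncomputable def dis {V W : Type} (G : WDigraph V) (H : WDigraph W) (φ : V → W) : ℝ :=
  sSup (insert 0 {d : ℝ | ∃ x x' : V, G.edge x x' ∧ H.edge (φ x) (φ x') ∧
    d = |H.w (φ x) (φ x') - G.w x x'|})

/-- cod(φ, ψ): the maximum weight of an edge of the target of the form φ(x) → ψ(x) or
ψ(x) → φ(x) (0 if there is none). -/
noncomputable def cod {V W : Type} (H : WDigraph W) (φ ψ : V → W) : ℝ :=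
  sSup (insert 0 ({d : ℝ | ∃ x : V, H.edge (φ x) (ψ x) ∧ d = H.w (φ x) (ψ x)} ∪
                  {d : ℝ | ∃ x : V, H.edge (ψ x) (φ x) ∧ d = H.w (ψ x) (φ x)}))

/-- One-step homotopy of maps into a weighted digraph H: f(x) ⇒ g(x) for all x, or
g(x) ⇒ f(x) for all x. -/
def StepHomotopic {V W : Type} (H : WDigraph W) (f g : V → W) : Prop :=
  (∀ x : V, f x = g x ∨ H.edge (f x) (g x)) ∨
  (∀ x : V, g x = f x ∨ H.edge (g x) (f x))

/-- The elementary paths of the path complex generated by (the underlying digraph of)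
a weighted digraph. -/
def pathsOfW {V : Type} (G : WDigraph V) : Set (List V) :=
  {l | l ≠ [] ∧ l.Chain' G.edge}

end PH


namespace PH

/-! ### Auxiliary operators and combinatorial lemmas -/

section Aux

variable (K : Type) [Field K] {V W : Type}

/-- Regularization projection. -/
noncomputable def RP (V : Type) : (List V →₀ K) →ₗ[K] (List V →₀ K) :=
  Finsupp.lsum K fun p => LinearMap.toSpanSingleton K (List V →₀ K)
    (if Reg p then Finsupp.single p (1 : K) else 0)

/-- Augmented full boundary (no regularization, no degree guard). -/
noncomputable def dAug (V : Type) : (List V →₀ K) →ₗ[K] (List V →₀ K) :=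
  Finsupp.lsum K fun p => LinearMap.toSpanSingleton K (List V →₀ K)
    (∑ q : Fin p.length, ((-1 : K) ^ (q : ℕ)) • Finsupp.single (p.eraseIdx (q : ℕ)) (1 : K))

noncomputable def mapD (f : V → W) : (List V →₀ K) →ₗ[K] (List W →₀ K) :=
  Finsupp.lmapDomain K K (List.map f)

noncomputable def coneOp (a : V) : (List V →₀ K) →ₗ[K] (List V →₀ K) :=
  Finsupp.lmapDomain K K (List.cons a)

/-- Full prism operator. -/
noncomputable def Lfull (f g : V → W) : (List V →₀ K) →ₗ[K] (List W →₀ K) :=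
  Finsupp.lsum K fun p => LinearMap.toSpanSingleton K (List W →₀ K)
    (∑ k : Fin p.length, ((-1 : K) ^ (k : ℕ)) •
      Finsupp.single ((p.take ((k : ℕ)+1)).map f ++ (p.drop (k : ℕ)).map g) (1 : K))

/-- Regularized prism operator. -/
noncomputable def Lreg (f g : V → W) : (List V →₀ K) →ₗ[K] (List W →₀ K) :=
  (RP K W).comp (Lfull K f g)

variable {K}

lemma single_eq_smul (p : List V) (b : K) :
    Finsupp.single p b = b • Finsupp.single p (1 : K) := by
  simp [Finsupp.smul_single']

/-- To prove equality of linear maps out of `List V →₀ K` it is enough to check on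
`single p 1`. -/
lemma lhom_ext1 {N : Type} [AddCommGroup N] [Module K N]
    {φ ψ : (List V →₀ K) →ₗ[K] N}
    (h : ∀ p : List V, φ (Finsupp.single p 1) = ψ (Finsupp.single p 1)) : φ = ψ := by
  apply Finsupp.lhom_ext
  intro p b
  rw [single_eq_smul, map_smul, map_smul, h]

variable (K)

@[simp] lemma RP_single (p : List V) :
    RP K V (Finsupp.single p 1) = if Reg p then Finsupp.single p (1 : K) else 0 := by
  simp [RP, Finsupp.lsum_single, LinearMap.toSpanSingleton_apply]

@[simp] lemma dAug_single (p : List V) :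
    dAug K V (Finsupp.single p 1) =
      ∑ q : Fin p.length, ((-1 : K) ^ (q : ℕ)) • Finsupp.single (p.eraseIdx (q : ℕ)) (1 : K) := by
  simp [dAug, Finsupp.lsum_single, LinearMap.toSpanSingleton_apply]

@[simp] lemma mapD_single (f : V → W) (p : List V) :
    mapD K f (Finsupp.single p (1 : K)) = Finsupp.single (p.map f) 1 := by
  simp [mapD, Finsupp.lmapDomain_apply, Finsupp.mapDomain_single]

@[simp] lemma coneOp_single (a : V) (p : List V) :
    coneOp K a (Finsupp.single p (1 : K)) = Finsupp.single (a :: p) 1 := by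
  simp [coneOp, Finsupp.lmapDomain_apply, Finsupp.mapDomain_single]

@[simp] lemma Lfull_single (f g : V → W) (p : List V) :
    Lfull K f g (Finsupp.single p 1) =
      ∑ k : Fin p.length, ((-1 : K) ^ (k : ℕ)) •
        Finsupp.single ((p.take ((k : ℕ)+1)).map f ++ (p.drop (k : ℕ)).map g) (1 : K) := by
  simp [Lfull, Finsupp.lsum_single, LinearMap.toSpanSingleton_apply]

lemma dReg_single (p : List V) :
    dReg K V (Finsupp.single p 1) =
      if 2 ≤ p.length then
        ∑ q : Fin p.length, ((-1 : K) ^ (q : ℕ)) •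
          (if Reg (p.eraseIdx (q : ℕ)) then Finsupp.single (p.eraseIdx (q : ℕ)) (1 : K) else 0)
      else 0 := by
  simp [dReg, Finsupp.lsum_single, LinearMap.toSpanSingleton_apply]

lemma find_single (f : V → W) (p : List V) :
    find K f (Finsupp.single p 1) =
      if Reg (p.map f) then Finsupp.single (p.map f) (1 : K) else 0 := by
  simp [find, Finsupp.lsum_single, LinearMap.toSpanSingleton_apply]

lemma dReg_single_eq (p : List V) :
    dReg K V (Finsupp.single p 1) =
      if 2 ≤ p.length then RP K V (dAug K V (Finsupp.single p 1)) else 0 := by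
  rw [dReg_single, dAug_single, map_sum]
  congr 1
  refine Finset.sum_congr rfl fun q _ => ?_
  rw [map_smul, RP_single]

variable {K}

/-! ### Regularity combinatorics -/

lemma chain'_iff_getElem' {α : Type} {R : α → α → Prop} {l : List α} :
    List.Chain' R l ↔ ∀ (i : ℕ) (_hi : i + 1 < l.length), R l[i] l[i+1] :=
  List.isChain_iff_getElem

lemma chain'_map' {α β : Type} {R : α → α → Prop} (f : β → α) {l : List β} :
    List.Chain' R (l.map f) ↔ List.Chain' (fun a b => R (f a) (f b)) l :=
  List.isChain_map f

lemma chain'_cons' {α : Type} {R : α → α → Prop} {x y : α} {l : List α} :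
    List.Chain' R (x :: y :: l) ↔ R x y ∧ List.Chain' R (y :: l) :=
  List.isChain_cons_cons

lemma not_reg_iff (l : List V) :
    ¬ Reg l ↔ ∃ i : ℕ, ∃ h : i + 1 < l.length, l[i] = l[i+1] := by
  rw [Reg, chain'_iff_getElem']
  constructor
  · intro h
    push_neg at h
    obtain ⟨i, hi, heq⟩ := h
    refine ⟨i, by omega, ?_⟩
    simpa [List.get_eq_getElem] using heq
  · rintro ⟨i, hi, heq⟩ h
    exact h i (by omega) (by simpa [List.get_eq_getElem] using heq)

lemma reg_of_reg_map (f : V → W) {l : List V} (h : Reg (l.map f)) : Reg l := by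
  rw [Reg, chain'_map'] at h
  exact h.imp fun a b hab => fun hc => hab (by rw [hc])

lemma not_reg_eraseIdx {l : List V} {i q : ℕ} (hi : i + 1 < l.length)
    (heq : l[i] = l[i+1]) (hq : q ≠ i) (hq' : q ≠ i + 1) (hql : q < l.length) :
    ¬ Reg (l.eraseIdx q) := by
  have hlen : (l.eraseIdx q).length = l.length - 1 := by
    rw [List.length_eraseIdx]; simp [hql]
  rw [not_reg_iff]
  rcases Nat.lt_or_ge q i with hqi | hqi
  · have h1 : i - 1 + 1 < (l.eraseIdx q).length := by omega
    refine ⟨i - 1, h1, ?_⟩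
    have e1 : (l.eraseIdx q)[i-1] = l[i] := by
      rw [List.getElem_eraseIdx]
      rw [dif_neg (by omega)]
      congr 1; omega
    have e2 : (l.eraseIdx q)[i-1+1] = l[i+1] := by
      rw [List.getElem_eraseIdx]
      rw [dif_neg (by omega)]
      congr 1; omega
    rw [e1, e2, heq]
  · have h1 : i + 1 < (l.eraseIdx q).length := by omega
    refine ⟨i, h1, ?_⟩
    have e1 : (l.eraseIdx q)[i] = l[i] := by
      rw [List.getElem_eraseIdx, dif_pos (by omega)]
    have e2 : (l.eraseIdx q)[i+1] = l[i+1] := by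
      rw [List.getElem_eraseIdx, dif_pos (by omega)]
    rw [e1, e2, heq]

lemma eraseIdx_adj_eq {l : List V} {i : ℕ} (hi : i + 1 < l.length)
    (heq : l[i] = l[i+1]) : l.eraseIdx i = l.eraseIdx (i+1) := by
  apply List.ext_getElem
  · rw [List.length_eraseIdx, List.length_eraseIdx]
    simp only [if_pos (by omega : i < l.length), if_pos (by omega : i + 1 < l.length)]
  · intro n h1 h2
    rw [List.getElem_eraseIdx, List.getElem_eraseIdx]
    rcases Nat.lt_trichotomy n i with h | h | h
    · rw [dif_pos h, dif_pos (by omega)]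
    · subst h
      rw [dif_neg (by omega), dif_pos (by omega)]
      exact heq.symm
    · rw [dif_neg (by omega), dif_neg (by omega)]

lemma sum_cancel {K : Type} [Field K] {l : List V} (hl : ¬ Reg l) :
    ∑ q : Fin l.length, ((-1 : K) ^ (q : ℕ)) •
      (if Reg (l.eraseIdx (q : ℕ)) then Finsupp.single (l.eraseIdx (q : ℕ)) (1 : K) else 0)
      = 0 := by
  obtain ⟨i, hi, heq⟩ := (not_reg_iff l).mp hl
  have hii : (⟨i, by omega⟩ : Fin l.length) ≠ ⟨i+1, hi⟩ := by
    simp [Fin.ext_iff]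
  rw [Finset.sum_eq_add (⟨i, by omega⟩ : Fin l.length) ⟨i+1, hi⟩ hii
    (fun c _ hc => by
      have h1 : (c : ℕ) ≠ i := fun h => hc.1 (by simp [Fin.ext_iff, h])
      have h2 : (c : ℕ) ≠ i + 1 := fun h => hc.2 (by simp [Fin.ext_iff, h])
      simp only [if_neg (not_reg_eraseIdx hi heq h1 h2 c.isLt), smul_zero])
    (by simp) (by simp)]
  simp only
  rw [eraseIdx_adj_eq hi heq, pow_succ]
  rcases Classical.em (Reg (l.eraseIdx (i+1))) with h | h
  · rw [if_pos h]; module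
  · rw [if_neg h]; simp

lemma RP_dAug_single_irreg {K : Type} [Field K] {l : List V} (hl : ¬ Reg l) :
    RP K V (dAug K V (Finsupp.single l 1)) = 0 := by
  rw [dAug_single, map_sum]
  rw [← sum_cancel (K := K) hl]
  refine Finset.sum_congr rfl fun q _ => ?_
  rw [map_smul, RP_single]

lemma dReg_single_irreg {K : Type} [Field K] {l : List V} (hl : ¬ Reg l) :
    dReg K V (Finsupp.single l 1) = 0 := by
  rw [dReg_single_eq]
  split_ifs with h
  · exact RP_dAug_single_irreg hl
  · rfl

end Aux

end PH

namespace PH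
section Prism
variable {K : Type} [Field K] {V W : Type}

lemma map_eraseIdx (f : V → W) (l : List V) (q : ℕ) :
    (l.map f).eraseIdx q = (l.eraseIdx q).map f := by
  induction l generalizing q with
  | nil => simp
  | cons a t ih =>
    cases q with
    | zero => simp
    | succ j => simp [List.eraseIdx_cons_succ, ih]

lemma dAug_cone (a : V) :
    (dAug K V).comp (coneOp K a) = LinearMap.id - (coneOp K a).comp (dAug K V) := by
  apply lhom_ext1
  intro p
  simp only [LinearMap.comp_apply, LinearMap.sub_apply, LinearMap.id_apply, coneOp_single,
    dAug_single]
  rw [show (a :: p).length = p.length + 1 from rfl, Fin.sum_univ_succ]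
  simp only [Fin.val_zero, pow_zero, one_smul, List.eraseIdx_cons_zero, Fin.val_succ,
    List.eraseIdx_cons_succ, pow_succ, mul_neg_one, neg_smul]
  rw [Finset.sum_neg_distrib, map_sum]
  simp only [map_smul, coneOp_single]
  abel

lemma Lfull_cone (f g : V → W) (x : V) :
    (Lfull K f g).comp (coneOp K x) =
      (coneOp K (f x)).comp ((mapD K g).comp (coneOp K x)) -
        (coneOp K (f x)).comp (Lfull K f g) := by
  apply lhom_ext1
  intro t
  simp only [LinearMap.comp_apply, LinearMap.sub_apply, coneOp_single, Lfull_single,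
    mapD_single]
  rw [show (x :: t).length = t.length + 1 from rfl, Fin.sum_univ_succ]
  simp only [Fin.val_zero, pow_zero, one_smul, Fin.val_succ, pow_succ, mul_neg_one, neg_smul,
    List.take_succ_cons, List.drop_succ_cons, List.drop_zero, List.take_zero, List.map_cons,
    List.map_nil, List.nil_append, List.cons_append, List.singleton_append]
  rw [Finset.sum_neg_distrib, map_sum]
  simp only [map_smul, coneOp_single]
  abel

lemma mapD_cone (g : V → W) (x : V) :
    (mapD K g).comp (coneOp K x) = (coneOp K (g x)).comp (mapD K g) := by
  apply lhom_ext1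
  intro p
  simp [LinearMap.comp_apply]

lemma dAug_mapD (f : V → W) :
    (dAug K W).comp (mapD K f) = (mapD K f).comp (dAug K V) := by
  apply lhom_ext1
  intro p
  simp only [LinearMap.comp_apply, mapD_single, dAug_single, List.length_map, map_sum,
    map_smul, map_eraseIdx, mapD_single]
  rw [Fin.sum_univ_eq_sum_range
      (fun q => ((-1 : K) ^ q • (Finsupp.single (List.map f (p.eraseIdx q)) 1 : List W →₀ K))),
    Fin.sum_univ_eq_sum_range
      (fun q => ((-1 : K) ^ q • (Finsupp.single (List.map f (p.eraseIdx q)) 1 : List W →₀ K))),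
    List.length_map]

lemma augPrism_single (f g : V → W) (p : List V) :
    dAug K W (Lfull K f g (Finsupp.single p 1)) +
      Lfull K f g (dAug K V (Finsupp.single p 1)) =
    mapD K g (Finsupp.single p 1) - mapD K f (Finsupp.single p 1) := by
  induction p with
  | nil =>
    simp [Lfull_single, dAug_single]
  | cons x t ih =>
    set st := Finsupp.single t (1 : K) with hst
    have hs : Finsupp.single (x :: t) (1 : K) = coneOp K x st := (coneOp_single K x t).symm
    have l1 := LinearMap.congr_fun (Lfull_cone (K := K) f g x) st
    have l2 := LinearMap.congr_fun (Lfull_cone (K := K) f g x) (dAug K V st)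
    have d1 := LinearMap.congr_fun (dAug_cone (K := K) x) st
    have dc1 := LinearMap.congr_fun (dAug_cone (K := K) (f x)) (mapD K g (coneOp K x st))
    have dc2 := LinearMap.congr_fun (dAug_cone (K := K) (f x)) (Lfull K f g st)
    have dm := LinearMap.congr_fun (dAug_mapD (K := K) g) (coneOp K x st)
    simp only [LinearMap.comp_apply, LinearMap.sub_apply, LinearMap.id_apply] at l1 l2 d1 dc1 dc2 dm
    have ih' : dAug K W (Lfull K f g st) =
        mapD K g st - mapD K f st - Lfull K f g (dAug K V st) := by
      rw [← ih]; abel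
    have mf : mapD K f (coneOp K x st) = coneOp K (f x) (mapD K f st) := by
      rw [hst]; simp
    rw [hs, l1, map_sub, dc1, dc2, dm, d1]
    simp only [map_sub]
    rw [l2, ih', mf]
    simp only [map_sub]
    abel

end Prism
end PH
namespace PH
section PrismReg
variable {K : Type} [Field K] {V W : Type}

lemma prism_term_len (f g : V → W) {p : List V} {k : ℕ} (hk : k < p.length) :
    ((p.take (k+1)).map f ++ (p.drop k).map g).length = p.length + 1 := by
  simp [List.length_take, List.length_drop]
  omega

lemma prism_term_not_reg (f g : V → W) {p : List V} (hp : ¬ Reg p) {k : ℕ}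
    (hk : k < p.length) :
    ¬ Reg ((p.take (k+1)).map f ++ (p.drop k).map g) := by
  obtain ⟨i, hi, heq⟩ := (not_reg_iff p).mp hp
  have hTlen : ((p.take (k+1)).map f ++ (p.drop k).map g).length = p.length + 1 :=
    prism_term_len f g hk
  have hfst : ((p.take (k+1)).map f).length = k + 1 := by
    simp [List.length_take]; omega
  rw [not_reg_iff]
  rcases le_or_gt (i+1) k with hik | hik
  · refine ⟨i, by omega, ?_⟩
    rw [List.getElem_append_left (by omega), List.getElem_append_left (by omega)]
    simp only [List.getElem_map, List.getElem_take]
    exact congrArg f heq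
  · refine ⟨i+1, by omega, ?_⟩
    rw [List.getElem_append_right (by omega), List.getElem_append_right (by omega)]
    simp only [List.getElem_map, List.getElem_drop, hfst]
    have hgen : ∀ (a b : ℕ) (ha : a < p.length) (hb : b < p.length), a = i → b = i + 1 →
        g (p[a]'ha) = g (p[b]'hb) := by
      intro a b ha hb h1 h2
      subst h1; subst h2
      exact congrArg g heq
    exact hgen _ _ (by omega) (by omega) (by omega) (by omega)

lemma Lreg_single (f g : V → W) (p : List V) :
    Lreg K f g (Finsupp.single p 1) =
      ∑ k : Fin p.length, ((-1 : K) ^ (k : ℕ)) •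
        (if Reg ((p.take ((k : ℕ)+1)).map f ++ (p.drop (k : ℕ)).map g) then
          Finsupp.single ((p.take ((k : ℕ)+1)).map f ++ (p.drop (k : ℕ)).map g) (1 : K)
        else 0) := by
  rw [Lreg, LinearMap.comp_apply, Lfull_single, map_sum]
  refine Finset.sum_congr rfl fun k _ => ?_
  rw [map_smul, RP_single]

lemma Lreg_single_irreg (f g : V → W) {p : List V} (hp : ¬ Reg p) :
    Lreg K f g (Finsupp.single p 1) = 0 := by
  rw [Lreg_single]
  refine Finset.sum_eq_zero fun k _ => ?_
  rw [if_neg (prism_term_not_reg f g hp k.isLt), smul_zero]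

lemma RP_dAug_RP :
    ((RP K V).comp (dAug K V)).comp (RP K V) = (RP K V).comp (dAug K V) := by
  apply lhom_ext1
  intro p
  simp only [LinearMap.comp_apply, RP_single]
  split_ifs with h
  · rfl
  · rw [map_zero, map_zero, RP_dAug_single_irreg h]

lemma Lreg_RP (f g : V → W) : (Lreg K f g).comp (RP K V) = Lreg K f g := by
  apply lhom_ext1
  intro p
  simp only [LinearMap.comp_apply, RP_single]
  split_ifs with h
  · rfl
  · rw [map_zero, Lreg_single_irreg f g h]

lemma find_RP (f : V → W) : (find K f).comp (RP K V) = find K f := by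
  apply lhom_ext1
  intro p
  simp only [LinearMap.comp_apply, RP_single]
  split_ifs with h
  · rfl
  · rw [map_zero, find_single, if_neg (fun hr => h (reg_of_reg_map f hr))]

lemma find_eq_RP_mapD (f : V → W) : find K f = (RP K W).comp (mapD K f) := by
  apply lhom_ext1
  intro p
  simp only [LinearMap.comp_apply, mapD_single, RP_single, find_single]

lemma dReg_single_ge2 {p : List V} (hp : 2 ≤ p.length) :
    dReg K V (Finsupp.single p (1 : K)) = RP K V (dAug K V (Finsupp.single p 1)) := by
  rw [dReg_single_eq, if_pos hp]

lemma dReg_ite_term {T : List W} (hT : 2 ≤ T.length) :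
    dReg K W (if Reg T then Finsupp.single T (1 : K) else 0) =
      RP K W (dAug K W (if Reg T then Finsupp.single T (1 : K) else 0)) := by
  split_ifs with h
  · exact dReg_single_ge2 hT
  · simp

lemma dReg_Lreg_single (f g : V → W) (p : List V) :
    dReg K W (Lreg K f g (Finsupp.single p 1)) =
      RP K W (dAug K W (Lreg K f g (Finsupp.single p 1))) := by
  rw [Lreg_single, map_sum, map_sum, map_sum]
  apply Finset.sum_congr rfl
  intro k _
  rw [map_smul, map_smul, map_smul]
  congr 1
  refine dReg_ite_term ?_
  have hk := k.isLt
  simp only [List.length_append, List.length_map, List.length_take, List.length_drop]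
  omega

/-- The regularized prism identity: `∂ ∘ L + L ∘ ∂ = g_* - f_*`. -/
lemma prismReg (f g : V → W) :
    (dReg K W).comp (Lreg K f g) + (Lreg K f g).comp (dReg K V) =
      find K g - find K f := by
  apply lhom_ext1
  intro p
  simp only [LinearMap.add_apply, LinearMap.comp_apply, LinearMap.sub_apply]
  match p with
  | [] =>
    have h1 : Lreg K f g (Finsupp.single ([] : List V) 1) = 0 := by
      rw [Lreg_single]; simp
    have h2 : dReg K V (Finsupp.single ([] : List V) 1) = 0 := by
      rw [dReg_single]; simp
    rw [h1, h2, map_zero, map_zero, add_zero, find_single, find_single]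
    simp [Reg]
  | [a] =>
    have h2 : dReg K V (Finsupp.single [a] 1) = 0 := by
      rw [dReg_single]; simp
    rw [h2, map_zero, add_zero]
    have hL : Lreg K f g (Finsupp.single [a] 1) =
        if Reg [f a, g a] then Finsupp.single [f a, g a] (1 : K) else 0 := by
      rw [Lreg_single]
      simp [Fin.sum_univ_one]
    by_cases hfg : f a = g a
    · rw [hL, if_neg (by simp [Reg, List.Chain', hfg]), map_zero, find_single, find_single]
      simp [Reg, List.Chain', List.map, hfg]
    · rw [hL, if_pos (by simp [Reg, List.Chain', hfg]), find_single, find_single]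
      rw [dReg_single]
      simp only [List.length_cons, List.length_singleton, List.length_nil]
      rw [if_pos (by omega)]
      rw [Fin.sum_univ_two]
      simp [Reg, List.Chain', List.map, hfg, sub_eq_add_neg]
  | a :: b :: t =>
    have hp2 : 2 ≤ (a :: b :: t).length := by simp
    set p := a :: b :: t
    rw [dReg_Lreg_single, dReg_single_ge2 hp2]
    have e1 : Lreg K f g (RP K V (dAug K V (Finsupp.single p 1))) =
        RP K W (Lfull K f g (dAug K V (Finsupp.single p 1))) := by
      rw [← LinearMap.comp_apply (Lreg K f g) (RP K V), Lreg_RP, Lreg, LinearMap.comp_apply]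
    have e2 : dAug K W (Lreg K f g (Finsupp.single p 1)) =
        dAug K W (RP K W (Lfull K f g (Finsupp.single p 1))) := rfl
    rw [e1, e2]
    have e3 : RP K W (dAug K W (RP K W (Lfull K f g (Finsupp.single p 1)))) =
        RP K W (dAug K W (Lfull K f g (Finsupp.single p 1))) := by
      have := LinearMap.congr_fun (RP_dAug_RP (K := K) (V := W)) (Lfull K f g (Finsupp.single p 1))
      simpa using this
    rw [e3, ← map_add, augPrism_single, map_sub]
    rw [find_eq_RP_mapD, find_eq_RP_mapD]
    rfl

end PrismReg
end PH
namespace PH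
section ChainMap
variable {K : Type} [Field K] {V W : Type}

lemma dReg_single_eq_range {l : List V} (hl : 2 ≤ l.length) :
    dReg K V (Finsupp.single l 1) =
      ∑ q ∈ Finset.range l.length, ((-1 : K) ^ q) •
        (if Reg (l.eraseIdx q) then Finsupp.single (l.eraseIdx q) (1 : K) else 0) := by
  rw [dReg_single, if_pos hl, Fin.sum_univ_eq_sum_range
    (fun q => ((-1 : K) ^ q) •
      (if Reg (l.eraseIdx q) then Finsupp.single (l.eraseIdx q) (1 : K) else 0))]

lemma sum_cancel_range {l : List V} (hl : ¬ Reg l) :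
    ∑ q ∈ Finset.range l.length, ((-1 : K) ^ q) •
        (if Reg (l.eraseIdx q) then Finsupp.single (l.eraseIdx q) (1 : K) else 0) = 0 := by
  rw [← Fin.sum_univ_eq_sum_range
    (fun q => ((-1 : K) ^ q) •
      (if Reg (l.eraseIdx q) then Finsupp.single (l.eraseIdx q) (1 : K) else 0))]
  exact sum_cancel hl

lemma find_ite_term (f : V → W) (e : List V) :
    find K f (if Reg e then Finsupp.single e (1 : K) else 0) =
      if Reg (e.map f) then Finsupp.single (e.map f) (1 : K) else 0 := by
  by_cases h : Reg e
  · rw [if_pos h, find_single]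
  · rw [if_neg h, map_zero, eq_comm, if_neg (fun hr => h (reg_of_reg_map f hr))]

/-- The chain map property: `find` commutes with the regular boundary. -/
lemma find_dReg (f : V → W) :
    (find K f).comp (dReg K V) = (dReg K W).comp (find K f) := by
  apply lhom_ext1
  intro p
  simp only [LinearMap.comp_apply]
  by_cases h2 : 2 ≤ p.length
  · have hLHS : find K f (dReg K V (Finsupp.single p 1)) =
        ∑ q ∈ Finset.range p.length, ((-1 : K) ^ q) •
          (if Reg ((p.map f).eraseIdx q) then
            Finsupp.single ((p.map f).eraseIdx q) (1 : K) else 0) := by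
      rw [dReg_single_eq_range h2, map_sum]
      refine Finset.sum_congr rfl fun q _ => ?_
      rw [map_smul, find_ite_term, ← map_eraseIdx]
    rw [hLHS, find_single]
    split_ifs with hreg
    · rw [dReg_single_eq_range (by rw [List.length_map]; omega)]
      rw [List.length_map]
    · rw [map_zero]
      have hz := sum_cancel_range (K := K) (l := p.map f) hreg
      rw [List.length_map] at hz
      exact hz
  · have h0 : dReg K V (Finsupp.single p 1) = 0 := by
      rw [dReg_single, if_neg h2]
    rw [h0, map_zero, find_single]
    split_ifs with hreg
    · rw [dReg_single, if_neg (by rw [List.length_map]; omega)]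
    · rw [map_zero]

lemma find_comp (f : V → W) {U : Type} (g : W → U) :
    (find K g).comp (find K f) = find K (g ∘ f) := by
  apply lhom_ext1
  intro p
  simp only [LinearMap.comp_apply, find_single]
  have hm : (p.map f).map g = p.map (g ∘ f) := by rw [List.map_map]
  by_cases h : Reg (p.map f)
  · rw [if_pos h, find_single, hm]
  · rw [if_neg h, map_zero, eq_comm,
      if_neg (fun hr => h (reg_of_reg_map g (show Reg ((p.map f).map g) by rw [hm]; exact hr)))]

lemma find_id_mem {z : List V →₀ K} (hz : z ∈ Finsupp.supported K K {l : List V | Reg l}) :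
    find K (id : V → V) z = z := by
  rw [Finsupp.supported_eq_span_single] at hz
  induction hz using Submodule.span_induction with
  | mem x hx =>
    obtain ⟨l, hl, rfl⟩ := hx
    simp [find_single, List.map_id, show Reg l from hl]
  | zero => rw [map_zero]
  | add x y _ _ hx hy => rw [map_add, hx, hy]
  | smul c x _ hx => rw [map_smul, hx]

end ChainMap

section Transport
variable {K : Type} [Field K] {V W : Type}

lemma Asub_mono {P Q : Set (List V)} (h : P ⊆ Q) (n : ℕ) :
    Asub K P n ≤ Asub K Q n :=
  Finsupp.supported_mono (fun l hl => ⟨h hl.1, hl.2⟩)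

lemma OmegaSub_mono {P Q : Set (List V)} (h : P ⊆ Q) (n : ℕ) :
    OmegaSub K P n ≤ OmegaSub K Q n :=
  inf_le_inf (Asub_mono h n) (Submodule.comap_mono (Asub_mono h (n-1)))

lemma Zsub_mono {P Q : Set (List V)} (h : P ⊆ Q) (n : ℕ) :
    Zsub K P n ≤ Zsub K Q n :=
  inf_le_inf (OmegaSub_mono h n) le_rfl

lemma Bsub_mono {P Q : Set (List V)} (h : P ⊆ Q) (n : ℕ) :
    Bsub K P n ≤ Bsub K Q n :=
  Submodule.map_mono (OmegaSub_mono h (n+1))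

lemma find_mem_Asub {f : V → W} {P : Set (List V)} {Q : Set (List W)}
    (hPQ : ∀ l ∈ P, Reg (l.map f) → l.map f ∈ Q) {n : ℕ} {z : List V →₀ K}
    (hz : z ∈ Asub K P n) : find K f z ∈ Asub K Q n := by
  rw [Asub, Finsupp.supported_eq_span_single] at hz
  induction hz using Submodule.span_induction with
  | mem x hx =>
    obtain ⟨l, hl, rfl⟩ := hx
    rw [find_single]
    split_ifs with h
    · exact Finsupp.single_mem_supported K 1 ⟨hPQ l hl.1 h, by simp [hl.2.1], h⟩
    · exact Submodule.zero_mem _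
  | zero => rw [map_zero]; exact Submodule.zero_mem _
  | add x y _ _ hx hy => rw [map_add]; exact Submodule.add_mem _ hx hy
  | smul c x _ hx => rw [map_smul]; exact Submodule.smul_mem _ c hx

lemma Lreg_mem_Asub {a b : V → W} {P : Set (List V)} {Q : Set (List W)}
    (hPQ : ∀ l ∈ P, ∀ k : ℕ, k < l.length →
      Reg ((l.take (k+1)).map a ++ (l.drop k).map b) →
      ((l.take (k+1)).map a ++ (l.drop k).map b) ∈ Q)
    {n : ℕ} {z : List V →₀ K}
    (hz : z ∈ Asub K P n) : Lreg K a b z ∈ Asub K Q (n + 1) := by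
  rw [Asub, Finsupp.supported_eq_span_single] at hz
  induction hz using Submodule.span_induction with
  | mem x hx =>
    obtain ⟨l, hl, rfl⟩ := hx
    rw [Lreg_single]
    refine Submodule.sum_mem _ fun k _ => Submodule.smul_mem _ _ ?_
    split_ifs with h
    · refine Finsupp.single_mem_supported K 1 ⟨hPQ l hl.1 k k.isLt h, ?_, h⟩
      rw [prism_term_len a b k.isLt, hl.2.1]
    · exact Submodule.zero_mem _
  | zero => rw [map_zero]; exact Submodule.zero_mem _
  | add x y _ _ hx hy => rw [map_add]; exact Submodule.add_mem _ hx hy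
  | smul c x _ hx => rw [map_smul]; exact Submodule.smul_mem _ c hx

end Transport

section Chains
variable {V W : Type}

lemma chain'_comb {R S T : V → V → Prop} (h : ∀ x y, R x y → S x y → T x y) :
    ∀ {l : List V}, List.Chain' R l → List.Chain' S l → List.Chain' T l := by
  intro l
  induction l with
  | nil => intro _ _; exact List.IsChain.nil
  | cons a t ih =>
    intro hR hS
    cases t with
    | nil => exact List.IsChain.singleton _
    | cons b t' =>
      rw [chain'_cons'] at hR hS ⊢
      exact ⟨h _ _ hR.1 hS.1, ih hR.2 hS.2⟩

lemma chain'_map_of (b : V → W) {E : V → V → Prop} {E' : W → W → Prop}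
    (hb : ∀ x y, E x y → b x = b y ∨ E' (b x) (b y)) {l : List V}
    (hE : List.Chain' E l) (hreg : Reg (l.map b)) : List.Chain' E' (l.map b) := by
  rw [chain'_map']
  rw [Reg, chain'_map'] at hreg
  exact chain'_comb (fun x y hxy hne => (hb x y hxy).resolve_left hne) hE hreg

lemma prism_chain {E : V → V → Prop} {E' : W → W → Prop} (a b : V → W)
    (ha : ∀ x y, E x y → a x = a y ∨ E' (a x) (a y))
    (hb : ∀ x y, E x y → b x = b y ∨ E' (b x) (b y))
    (hcross : ∀ x, a x = b x ∨ E' (a x) (b x)) :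
    ∀ (l : List V) (k : ℕ), k < l.length → List.Chain' E l →
      Reg ((l.take (k+1)).map a ++ (l.drop k).map b) →
      List.Chain' E' ((l.take (k+1)).map a ++ (l.drop k).map b) := by
  intro l
  induction l with
  | nil => intro k hk; exact absurd hk (by simp)
  | cons x t ih =>
    intro k hk hchain hreg
    cases k with
    | zero =>
      simp only [List.take_succ_cons, List.take_zero, List.drop_zero, List.map_cons,
        List.map_nil, List.singleton_append] at hreg ⊢
      have hreg' : List.Chain' (· ≠ ·) (a x :: b x :: List.map b t) := hreg
      rw [chain'_cons']
      constructor
      · exact (hcross x).resolve_left (chain'_cons'.mp hreg').1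
      · have h2 : Reg ((x :: t).map b) := by
          rw [List.map_cons]; exact (chain'_cons'.mp hreg').2
        have := chain'_map_of b hb hchain h2
        rwa [List.map_cons] at this
    | succ j =>
      cases t with
      | nil => exact absurd hk (by simp)
      | cons z t' =>
        have hj : j < (z :: t').length := by simpa using hk
        simp only [List.take_succ_cons, List.drop_succ_cons, List.map_cons,
          List.cons_append] at hreg ⊢
        have hreg' : List.Chain' (· ≠ ·) (a x :: a z ::
            (List.map a (List.take j t') ++ List.map b (List.drop j (z :: t')))) := hreg
        rw [chain'_cons']
        constructor
        · exact (ha x z (chain'_cons'.mp hchain).1).resolve_left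
            (chain'_cons'.mp hreg').1
        · have h2 := ih j hj (chain'_cons'.mp hchain).2
            (by
              simp only [List.take_succ_cons, List.map_cons, List.cons_append]
              exact (chain'_cons'.mp hreg').2)
          simpa only [List.take_succ_cons, List.map_cons, List.cons_append] using h2
end Chains
end PH
namespace PH
section RealAux

lemma le_sSup_insert0 {s : Set ℝ} (hs : s.Finite) {x : ℝ} (hx : x ∈ s) :
    x ≤ sSup (insert 0 s) :=
  le_csSup ((hs.insert 0).bddAbove) (Set.mem_insert_of_mem _ hx)

lemma sSup_insert0_nonneg {s : Set ℝ} (hs : s.Finite) : 0 ≤ sSup (insert 0 s) :=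
  le_csSup ((hs.insert 0).bddAbove) (Set.mem_insert _ _)

variable {V W : Type} [Fintype V] [Fintype W]

lemma dis_set_finite (G : WDigraph V) (H : WDigraph W) (φ : V → W) :
    {d : ℝ | ∃ x x' : V, G.edge x x' ∧ H.edge (φ x) (φ x') ∧
      d = |H.w (φ x) (φ x') - G.w x x'|}.Finite := by
  refine Set.Finite.subset
    (Set.finite_range (fun z : V × V => |H.w (φ z.1) (φ z.2) - G.w z.1 z.2|)) ?_
  rintro d ⟨x, x', _, _, rfl⟩
  exact ⟨(x, x'), rfl⟩

lemma dis_nonneg (G : WDigraph V) (H : WDigraph W) (φ : V → W) : 0 ≤ dis G H φ :=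
  sSup_insert0_nonneg (dis_set_finite G H φ)

lemma abs_le_dis (G : WDigraph V) (H : WDigraph W) (φ : V → W) {x x' : V}
    (h1 : G.edge x x') (h2 : H.edge (φ x) (φ x')) :
    |H.w (φ x) (φ x') - G.w x x'| ≤ dis G H φ :=
  le_sSup_insert0 (dis_set_finite G H φ) ⟨x, x', h1, h2, rfl⟩

lemma cod_set_finite (H : WDigraph W) (φ ψ : V → W) :
    ({d : ℝ | ∃ x : V, H.edge (φ x) (ψ x) ∧ d = H.w (φ x) (ψ x)} ∪
     {d : ℝ | ∃ x : V, H.edge (ψ x) (φ x) ∧ d = H.w (ψ x) (φ x)}).Finite := by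
  refine Set.Finite.union ?_ ?_
  · refine Set.Finite.subset (Set.finite_range (fun x : V => H.w (φ x) (ψ x))) ?_
    rintro d ⟨x, _, rfl⟩; exact ⟨x, rfl⟩
  · refine Set.Finite.subset (Set.finite_range (fun x : V => H.w (ψ x) (φ x))) ?_
    rintro d ⟨x, _, rfl⟩; exact ⟨x, rfl⟩

lemma le_cod_left (H : WDigraph W) (φ ψ : V → W) {x : V} (h : H.edge (φ x) (ψ x)) :
    H.w (φ x) (ψ x) ≤ cod H φ ψ :=
  le_sSup_insert0 (cod_set_finite H φ ψ) (Or.inl ⟨x, h, rfl⟩)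

lemma le_cod_right (H : WDigraph W) (φ ψ : V → W) {x : V} (h : H.edge (ψ x) (φ x)) :
    H.w (ψ x) (φ x) ≤ cod H φ ψ :=
  le_sSup_insert0 (cod_set_finite H φ ψ) (Or.inr ⟨x, h, rfl⟩)

/-- Edge transport along a digraph map with controlled distortion. -/
lemma edge_transport (G : WDigraph V) (H : WDigraph W) (φ : V → W) (hφ : IsDGMap G H φ)
    {δ δ' : ℝ} (hdd : δ + dis G H φ ≤ δ') {x y : V} (h : (sublevel G δ).edge x y) :
    φ x = φ y ∨ (sublevel H δ').edge (φ x) (φ y) := by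
  rcases hφ x y h.1 with he | he
  · exact Or.inl he
  · refine Or.inr ⟨he, ?_⟩
    have habs := abs_le_dis G H φ h.1 he
    have h1 := (abs_le.mp habs).2
    have h2 := h.2
    linarith

lemma sublevel_edge_mono (G : WDigraph V) {δ δ' : ℝ} (h : δ ≤ δ') {x y : V}
    (hxy : (sublevel G δ).edge x y) : (sublevel G δ').edge x y :=
  ⟨hxy.1, le_trans hxy.2 h⟩

lemma pathsOfW_mono (G : WDigraph V) {δ δ' : ℝ} (h : δ ≤ δ') :
    pathsOfW (sublevel G δ) ⊆ pathsOfW (sublevel G δ') := by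
  rintro l ⟨hne, hchain⟩
  exact ⟨hne, hchain.imp (fun a b => sublevel_edge_mono G h)⟩

end RealAux

section MemIff

variable {K : Type} [Field K] {V : Type}

lemma mem_OmegaSub_iff {P : Set (List V)} {n : ℕ} {z : List V →₀ K} :
    z ∈ OmegaSub K P n ↔ z ∈ Asub K P n ∧ dReg K V z ∈ Asub K P (n-1) := by
  simp [OmegaSub, Submodule.mem_inf, Submodule.mem_comap]

lemma mem_Zsub_iff {P : Set (List V)} {n : ℕ} {z : List V →₀ K} :
    z ∈ Zsub K P n ↔
      (z ∈ Asub K P n ∧ dReg K V z ∈ Asub K P (n-1)) ∧ dReg K V z = 0 := by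
  simp [Zsub, mem_OmegaSub_iff, Submodule.mem_inf, LinearMap.mem_ker, OmegaSub,
    Submodule.mem_comap]

end MemIff
end PH
namespace PH
section Homotopy
variable {K : Type} [Field K] {V W : Type} [Fintype V] [Fintype W]

lemma homotopy_side (G : WDigraph V) (H : WDigraph W) (φ : V → W) (ψ : W → V)
    (hφ : IsDGMap G H φ) (hψ : IsDGMap H G ψ)
    (m : ℕ) (F : ℕ → V → V) (hf0 : F 0 = ψ ∘ φ) (hfm : F m = id)
    (hfdg : ∀ k : ℕ, k ≤ m → IsDGMap G G (F k))
    (hfstep : ∀ k : ℕ, 1 ≤ k → k ≤ m → StepHomotopic G (F (k-1)) (F k))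
    {η : ℝ} (hηφ : dis G H φ ≤ η) (hηψ : dis H G ψ ≤ η)
    (hmid : ∀ k : ℕ, 1 ≤ k → k ≤ m - 1 → dis G G (F k) ≤ 2*η)
    (hcod : ∀ k : ℕ, 1 ≤ k → k ≤ m → cod G (F (k-1)) (F k) ≤ 2*η)
    (hη0 : 0 ≤ η) (p : ℕ) {δ : ℝ} (hδ : 0 ≤ δ)
    {z : List V →₀ K} (hz : z ∈ Zsub K (pathsOfW (sublevel G δ)) p) :
    find K ψ (find K φ z) - z ∈ Bsub K (pathsOfW (sublevel G (δ + 2*η))) p := by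
  obtain ⟨⟨hzA, -⟩, hzk⟩ := mem_Zsub_iff.mp hz
  have hdisφ := dis_nonneg G H φ
  -- edge transport for every F j
  have hedge : ∀ j, j ≤ m → ∀ x y, (sublevel G δ).edge x y →
      F j x = F j y ∨ (sublevel G (δ + 2*η)).edge (F j x) (F j y) := by
    intro j hj x y hxy
    by_cases hj0 : j = 0
    · subst hj0
      rw [hf0]
      rcases edge_transport G H φ hφ (le_refl (δ + dis G H φ)) hxy with he | he
      · left; simp [Function.comp, he]
      · rcases edge_transport H G ψ hψ (le_refl _) he with h2 | h2
        · left; simpa [Function.comp] using h2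
        · right
          have hd2 := dis_nonneg H G ψ
          exact ⟨h2.1, le_trans h2.2 (by linarith)⟩
    · by_cases hjm : j = m
      · subst hjm
        rw [hfm]
        exact Or.inr ⟨hxy.1, le_trans hxy.2 (by linarith)⟩
      · rcases hfdg j hj x y hxy.1 with he | he
        · exact Or.inl he
        · right
          refine ⟨he, ?_⟩
          have habs := (abs_le.mp (abs_le_dis G G (F j) hxy.1 he)).2
          have h2 := hmid j (by omega) (by omega)
          have h3 := hxy.2
          linarith
  -- find (F j) preserves allowed chains
  have hfind : ∀ j, j ≤ m → ∀ n : ℕ, ∀ x : List V →₀ K,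
      x ∈ Asub K (pathsOfW (sublevel G δ)) n →
      find K (F j) x ∈ Asub K (pathsOfW (sublevel G (δ + 2*η))) n := by
    intro j hj n x hx
    refine find_mem_Asub (Q := pathsOfW (sublevel G (δ + 2*η))) (fun l hl hreg => ⟨?_, ?_⟩) hx
    · simpa using hl.1
    · exact chain'_map_of (F j) (hedge j hj) hl.2 hreg
  -- generic prism facts
  have key : ∀ u v : V → V,
      (∀ x y, (sublevel G δ).edge x y → u x = u y ∨ (sublevel G (δ+2*η)).edge (u x) (u y)) →
      (∀ x y, (sublevel G δ).edge x y → v x = v y ∨ (sublevel G (δ+2*η)).edge (v x) (v y)) →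
      (∀ x, u x = v x ∨ (sublevel G (δ+2*η)).edge (u x) (v x)) →
      Lreg K u v z ∈ Asub K (pathsOfW (sublevel G (δ+2*η))) (p+1) := by
    intro u v hu hv huv
    refine Lreg_mem_Asub (Q := pathsOfW (sublevel G (δ + 2*η))) (fun l hl k hk hreg => ⟨?_, ?_⟩) hzA
    · refine List.ne_nil_of_length_pos ?_
      rw [prism_term_len u v hk]; omega
    · exact prism_chain u v hu hv huv l k hk hl.2 hreg
  have key2 : ∀ u v : V → V,
      dReg K V (Lreg K u v z) = find K v z - find K u z := by
    intro u v
    have h := LinearMap.congr_fun (prismReg (K := K) u v) z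
    simp only [LinearMap.add_apply, LinearMap.comp_apply, LinearMap.sub_apply] at h
    rwa [hzk, map_zero, add_zero] at h
  -- the step chains
  set c : ℕ → (List V →₀ K) := fun j =>
    if _ : ∀ x, F j x = F (j+1) x ∨ G.edge (F j x) (F (j+1) x) then
      Lreg K (F j) (F (j+1)) z
    else - Lreg K (F (j+1)) (F j) z with hc
  have hc_mem : ∀ j, j < m →
      c j ∈ OmegaSub K (pathsOfW (sublevel G (δ + 2*η))) (p+1) ∧
      dReg K V (c j) = find K (F (j+1)) z - find K (F j) z := by
    intro j hjm
    have hstep := hfstep (j+1) (by omega) (by omega)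
    have hj1 : j + 1 - 1 = j := rfl
    rw [hj1] at hstep
    have hcodj := hcod (j+1) (by omega) (by omega)
    rw [hj1] at hcodj
    by_cases hdir : ∀ x, F j x = F (j+1) x ∨ G.edge (F j x) (F (j+1) x)
    · have hcj : c j = Lreg K (F j) (F (j+1)) z := by
        simp only [hc]; rw [dif_pos hdir]
      have hcr : ∀ x, F j x = F (j+1) x ∨ (sublevel G (δ+2*η)).edge (F j x) (F (j+1) x) := by
        intro x
        rcases hdir x with he | he
        · exact Or.inl he
        · exact Or.inr ⟨he, le_trans (le_cod_left G (F j) (F (j+1)) he) (by linarith)⟩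
      constructor
      · rw [hcj, mem_OmegaSub_iff]
        refine ⟨key _ _ (hedge j (by omega)) (hedge (j+1) (by omega)) hcr, ?_⟩
        rw [key2]
        exact Submodule.sub_mem _ (hfind (j+1) (by omega) p z hzA) (hfind j (by omega) p z hzA)
      · rw [hcj, key2]
    · have hdir2 := hstep.resolve_left hdir
      have hcj : c j = - Lreg K (F (j+1)) (F j) z := by
        simp only [hc]; rw [dif_neg hdir]
      have hcr : ∀ x, F (j+1) x = F j x ∨ (sublevel G (δ+2*η)).edge (F (j+1) x) (F j x) := by
        intro x
        rcases hdir2 x with he | he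
        · exact Or.inl he
        · exact Or.inr ⟨he, le_trans (le_cod_right G (F j) (F (j+1)) he) (by linarith)⟩
      constructor
      · rw [hcj]
        refine Submodule.neg_mem _ ?_
        rw [mem_OmegaSub_iff]
        refine ⟨key _ _ (hedge (j+1) (by omega)) (hedge j (by omega)) hcr, ?_⟩
        rw [key2]
        exact Submodule.sub_mem _ (hfind j (by omega) p z hzA) (hfind (j+1) (by omega) p z hzA)
      · rw [hcj, map_neg, key2, neg_sub]
  -- assemble the homotopy
  have hsum_mem : (∑ j ∈ Finset.range m, c j) ∈
      OmegaSub K (pathsOfW (sublevel G (δ + 2*η))) (p+1) :=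
    Submodule.sum_mem _ (fun j hj => (hc_mem j (Finset.mem_range.mp hj)).1)
  have hdsum : dReg K V (∑ j ∈ Finset.range m, c j) =
      find K (F m) z - find K (F 0) z := by
    rw [map_sum, Finset.sum_congr rfl (fun j hj => (hc_mem j (Finset.mem_range.mp hj)).2),
      Finset.sum_range_sub (fun j => find K (F j) z)]
  have hFm : find K (F m) z = z := by
    rw [hfm]
    exact find_id_mem (Finsupp.supported_mono (fun l hl => hl.2.2) hzA)
  have hF0 : find K (F 0) z = find K ψ (find K φ z) := by
    rw [hf0, ← find_comp (K := K) φ ψ, LinearMap.comp_apply]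
  rw [Bsub]
  refine Submodule.mem_map.mpr ⟨-(∑ j ∈ Finset.range m, c j), Submodule.neg_mem _ hsum_mem, ?_⟩
  rw [map_neg, hdsum, hFm, hF0, neg_sub]

end Homotopy
end PH

theorem statement15 (K : Type) [Field K] (V W : Type) [Fintype V] [Fintype W]
    (G : PH.WDigraph V) (H : PH.WDigraph W) (φ : V → W) (ψ : W → V)
    (hφ : PH.IsDGMap G H φ) (hψ : PH.IsDGMap H G ψ)
    (m : ℕ) (f : ℕ → V → V) (g : ℕ → W → W)
    (hf0 : f 0 = ψ ∘ φ) (hfm : f m = id)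
    (hfdg : ∀ k : ℕ, k ≤ m → PH.IsDGMap G G (f k))
    (hfstep : ∀ k : ℕ, 1 ≤ k → k ≤ m → PH.StepHomotopic G (f (k - 1)) (f k))
    (hg0 : g 0 = φ ∘ ψ) (hgm : g m = id)
    (hgdg : ∀ k : ℕ, k ≤ m → PH.IsDGMap H H (g k))
    (hgstep : ∀ k : ℕ, 1 ≤ k → k ≤ m → PH.StepHomotopic H (g (k - 1)) (g k))
    (η : ℝ)
    (hη : η = max (PH.dis G H φ) (max (PH.dis H G ψ)
      (max ((1 / 2) * sSup (insert 0
          {d : ℝ | ∃ k : ℕ, 1 ≤ k ∧ k ≤ m - 1 ∧ d = PH.dis G G (f k)}))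
      (max ((1 / 2) * sSup (insert 0
          {d : ℝ | ∃ k : ℕ, 1 ≤ k ∧ k ≤ m - 1 ∧ d = PH.dis H H (g k)}))
      (max ((1 / 2) * sSup (insert 0
          {d : ℝ | ∃ k : ℕ, 1 ≤ k ∧ k ≤ m ∧ d = PH.cod G (f (k - 1)) (f k)}))
           ((1 / 2) * sSup (insert 0
          {d : ℝ | ∃ k : ℕ, 1 ≤ k ∧ k ≤ m ∧ d = PH.cod H (g (k - 1)) (g k)}))))))) :
    ∀ p : ℕ,
      -- φ and ψ induce the interleaving maps: they carry cycles to cycles and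
      -- boundaries to boundaries, one scale η later
      (∀ δ : ℝ, 0 ≤ δ →
        (∀ z : List V →₀ K, z ∈ PH.Zsub K (PH.pathsOfW (PH.sublevel G δ)) p →
            PH.find K φ z ∈ PH.Zsub K (PH.pathsOfW (PH.sublevel H (δ + η))) p) ∧
        (∀ z : List V →₀ K, z ∈ PH.Bsub K (PH.pathsOfW (PH.sublevel G δ)) p →
            PH.find K φ z ∈ PH.Bsub K (PH.pathsOfW (PH.sublevel H (δ + η))) p) ∧
        (∀ z : List W →₀ K, z ∈ PH.Zsub K (PH.pathsOfW (PH.sublevel H δ)) p →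
            PH.find K ψ z ∈ PH.Zsub K (PH.pathsOfW (PH.sublevel G (δ + η))) p) ∧
        (∀ z : List W →₀ K, z ∈ PH.Bsub K (PH.pathsOfW (PH.sublevel H δ)) p →
            PH.find K ψ z ∈ PH.Bsub K (PH.pathsOfW (PH.sublevel G (δ + η))) p)) ∧
      -- the structure maps of the two persistence modules are induced by the inclusions
      (∀ δ δ' : ℝ, 0 ≤ δ → δ ≤ δ' →
        PH.Zsub K (PH.pathsOfW (PH.sublevel G δ)) p ≤
          PH.Zsub K (PH.pathsOfW (PH.sublevel G δ')) p ∧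
        PH.Bsub K (PH.pathsOfW (PH.sublevel G δ)) p ≤
          PH.Bsub K (PH.pathsOfW (PH.sublevel G δ')) p ∧
        PH.Zsub K (PH.pathsOfW (PH.sublevel H δ)) p ≤
          PH.Zsub K (PH.pathsOfW (PH.sublevel H δ')) p ∧
        PH.Bsub K (PH.pathsOfW (PH.sublevel H δ)) p ≤
          PH.Bsub K (PH.pathsOfW (PH.sublevel H δ')) p) ∧
      -- and the composites equal the structure maps δ ≤ δ+2η on homology
      (∀ δ : ℝ, 0 ≤ δ →
        (∀ z : List V →₀ K, z ∈ PH.Zsub K (PH.pathsOfW (PH.sublevel G δ)) p →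
            PH.find K ψ (PH.find K φ z) - z ∈
              PH.Bsub K (PH.pathsOfW (PH.sublevel G (δ + 2 * η))) p) ∧
        (∀ z : List W →₀ K, z ∈ PH.Zsub K (PH.pathsOfW (PH.sublevel H δ)) p →
            PH.find K φ (PH.find K ψ z) - z ∈
              PH.Bsub K (PH.pathsOfW (PH.sublevel H (δ + 2 * η))) p)) := by
  -- abbreviations for the six quantities in the max
  set Sfd : Set ℝ := {d : ℝ | ∃ k : ℕ, 1 ≤ k ∧ k ≤ m - 1 ∧ d = PH.dis G G (f k)} with hSfd
  set Sgd : Set ℝ := {d : ℝ | ∃ k : ℕ, 1 ≤ k ∧ k ≤ m - 1 ∧ d = PH.dis H H (g k)} with hSgd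
  set Sfc : Set ℝ := {d : ℝ | ∃ k : ℕ, 1 ≤ k ∧ k ≤ m ∧ d = PH.cod G (f (k - 1)) (f k)} with hSfc
  set Sgc : Set ℝ := {d : ℝ | ∃ k : ℕ, 1 ≤ k ∧ k ≤ m ∧ d = PH.cod H (g (k - 1)) (g k)} with hSgc
  have hSfd_fin : Sfd.Finite := by
    refine Set.Finite.subset ((Set.finite_Iic (m-1)).image (fun k => PH.dis G G (f k))) ?_
    rintro d ⟨k, _, hk2, rfl⟩; exact ⟨k, hk2, rfl⟩
  have hSgd_fin : Sgd.Finite := by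
    refine Set.Finite.subset ((Set.finite_Iic (m-1)).image (fun k => PH.dis H H (g k))) ?_
    rintro d ⟨k, _, hk2, rfl⟩; exact ⟨k, hk2, rfl⟩
  have hSfc_fin : Sfc.Finite := by
    refine Set.Finite.subset ((Set.finite_Iic m).image
      (fun k => PH.cod G (f (k - 1)) (f k))) ?_
    rintro d ⟨k, _, hk2, rfl⟩; exact ⟨k, hk2, rfl⟩
  have hSgc_fin : Sgc.Finite := by
    refine Set.Finite.subset ((Set.finite_Iic m).image
      (fun k => PH.cod H (g (k - 1)) (g k))) ?_
    rintro d ⟨k, _, hk2, rfl⟩; exact ⟨k, hk2, rfl⟩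
  -- the six bounds coming from the definition of η
  have hηφ : PH.dis G H φ ≤ η := by rw [hη]; exact le_max_left _ _
  have hηψ : PH.dis H G ψ ≤ η := by
    rw [hη]; exact le_max_of_le_right (le_max_left _ _)
  have hC : (1 / 2) * sSup (insert 0 Sfd) ≤ η := by
    rw [hη]; exact le_max_of_le_right (le_max_of_le_right (le_max_left _ _))
  have hD : (1 / 2) * sSup (insert 0 Sgd) ≤ η := by
    rw [hη]
    exact le_max_of_le_right (le_max_of_le_right (le_max_of_le_right (le_max_left _ _)))
  have hE : (1 / 2) * sSup (insert 0 Sfc) ≤ η := by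
    rw [hη]
    exact le_max_of_le_right (le_max_of_le_right (le_max_of_le_right
      (le_max_of_le_right (le_max_left _ _))))
  have hFc : (1 / 2) * sSup (insert 0 Sgc) ≤ η := by
    rw [hη]
    exact le_max_of_le_right (le_max_of_le_right (le_max_of_le_right
      (le_max_of_le_right (le_max_right _ _))))
  have hη0 : 0 ≤ η := le_trans (PH.dis_nonneg G H φ) hηφ
  have hmidf : ∀ k : ℕ, 1 ≤ k → k ≤ m - 1 → PH.dis G G (f k) ≤ 2 * η := by
    intro k h1 h2
    have := PH.le_sSup_insert0 hSfd_fin (show PH.dis G G (f k) ∈ Sfd from ⟨k, h1, h2, rfl⟩)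
    linarith
  have hmidg : ∀ k : ℕ, 1 ≤ k → k ≤ m - 1 → PH.dis H H (g k) ≤ 2 * η := by
    intro k h1 h2
    have := PH.le_sSup_insert0 hSgd_fin (show PH.dis H H (g k) ∈ Sgd from ⟨k, h1, h2, rfl⟩)
    linarith
  have hcodf : ∀ k : ℕ, 1 ≤ k → k ≤ m → PH.cod G (f (k - 1)) (f k) ≤ 2 * η := by
    intro k h1 h2
    have := PH.le_sSup_insert0 hSfc_fin
      (show PH.cod G (f (k - 1)) (f k) ∈ Sfc from ⟨k, h1, h2, rfl⟩)
    linarith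
  have hcodg : ∀ k : ℕ, 1 ≤ k → k ≤ m → PH.cod H (g (k - 1)) (g k) ≤ 2 * η := by
    intro k h1 h2
    have := PH.le_sSup_insert0 hSgc_fin
      (show PH.cod H (g (k - 1)) (g k) ∈ Sgc from ⟨k, h1, h2, rfl⟩)
    linarith
  intro p
  refine ⟨?_, ?_, ?_⟩
  · -- part 1 : the interleaving maps
    intro δ hδ
    have condφ : ∀ l ∈ PH.pathsOfW (PH.sublevel G δ), PH.Reg (l.map φ) →
        l.map φ ∈ PH.pathsOfW (PH.sublevel H (δ + η)) := by
      intro l hl hreg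
      refine ⟨by simpa using hl.1, ?_⟩
      exact PH.chain'_map_of φ
        (fun x y hxy => PH.edge_transport G H φ hφ (by linarith) hxy) hl.2 hreg
    have condψ : ∀ l ∈ PH.pathsOfW (PH.sublevel H δ), PH.Reg (l.map ψ) →
        l.map ψ ∈ PH.pathsOfW (PH.sublevel G (δ + η)) := by
      intro l hl hreg
      refine ⟨by simpa using hl.1, ?_⟩
      exact PH.chain'_map_of ψ
        (fun x y hxy => PH.edge_transport H G ψ hψ (by linarith) hxy) hl.2 hreg
    refine ⟨?_, ?_, ?_, ?_⟩
    · intro z hz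
      rw [PH.mem_Zsub_iff] at hz ⊢
      obtain ⟨⟨hA1, -⟩, hk⟩ := hz
      have h0 : PH.dReg K W (PH.find K φ z) = 0 := by
        have h := LinearMap.congr_fun (PH.find_dReg (K := K) φ) z
        simp only [LinearMap.comp_apply] at h
        rw [hk, map_zero] at h
        exact h.symm
      exact ⟨⟨PH.find_mem_Asub condφ hA1, by rw [h0]; exact Submodule.zero_mem _⟩, h0⟩
    · intro z hz
      obtain ⟨ω, hω, rfl⟩ := Submodule.mem_map.mp hz
      have hcomm : PH.find K φ (PH.dReg K V ω) = PH.dReg K W (PH.find K φ ω) := by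
        have h := LinearMap.congr_fun (PH.find_dReg (K := K) φ) ω
        simpa using h
      rw [hcomm]
      refine Submodule.mem_map.mpr ⟨PH.find K φ ω, ?_, rfl⟩
      rw [PH.mem_OmegaSub_iff] at hω ⊢
      exact ⟨PH.find_mem_Asub condφ hω.1,
        by rw [← hcomm]; exact PH.find_mem_Asub condφ hω.2⟩
    · intro z hz
      rw [PH.mem_Zsub_iff] at hz ⊢
      obtain ⟨⟨hA1, -⟩, hk⟩ := hz
      have h0 : PH.dReg K V (PH.find K ψ z) = 0 := by
        have h := LinearMap.congr_fun (PH.find_dReg (K := K) ψ) z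
        simp only [LinearMap.comp_apply] at h
        rw [hk, map_zero] at h
        exact h.symm
      exact ⟨⟨PH.find_mem_Asub condψ hA1, by rw [h0]; exact Submodule.zero_mem _⟩, h0⟩
    · intro z hz
      obtain ⟨ω, hω, rfl⟩ := Submodule.mem_map.mp hz
      have hcomm : PH.find K ψ (PH.dReg K W ω) = PH.dReg K V (PH.find K ψ ω) := by
        have h := LinearMap.congr_fun (PH.find_dReg (K := K) ψ) ω
        simpa using h
      rw [hcomm]
      refine Submodule.mem_map.mpr ⟨PH.find K ψ ω, ?_, rfl⟩
      rw [PH.mem_OmegaSub_iff] at hω ⊢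
      exact ⟨PH.find_mem_Asub condψ hω.1,
        by rw [← hcomm]; exact PH.find_mem_Asub condψ hω.2⟩
  · -- part 2 : structure maps
    intro δ δ' _ hle
    have hG := PH.pathsOfW_mono G hle
    have hH := PH.pathsOfW_mono H hle
    exact ⟨PH.Zsub_mono hG p, PH.Bsub_mono hG p, PH.Zsub_mono hH p, PH.Bsub_mono hH p⟩
  · -- part 3 : the homotopies
    intro δ hδ
    constructor
    · intro z hz
      exact PH.homotopy_side G H φ ψ hφ hψ m f hf0 hfm hfdg hfstep hηφ hηψ hmidf hcodf
        hη0 p hδ hz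
    · intro z hz
      exact PH.homotopy_side H G ψ φ hψ hφ m g hg0 hgm hgdg hgstep hηψ hηφ hmidg hcodg
        hη0 p hδ hz
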